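/- The flip graph of triangulations of a convex n-gon is connected for every n ≥ 3. -/

import Mathlib

def IsPolygonDiagonal (n : ℕ) (p : Fin n × Fin n) : Prop :=
  p.1.val + 2 ≤ p.2.val ∧ ¬(p.1.val = 0 ∧ p.2.val = n - 1)

def Crossing (n : ℕ) (p q : Fin n × Fin n) : Prop :=
  (p.1 < q.1 ∧ q.1 < p.2 ∧ p.2 < q.2) ∨ (q.1 < p.1 ∧ p.1 < q.2 ∧ q.2 < p.2)

def IsTriangulation (n : ℕ) (S : Finset (Fin n × Fin n)) : Prop :=
  (∀ p ∈ S, IsPolygonDiagonal n p) ∧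
  (∀ p ∈ S, ∀ q ∈ S, ¬ Crossing n p q) ∧
  (∀ p, IsPolygonDiagonal n p → p ∉ S → ∃ q ∈ S, Crossing n p q)


lemma crossing_mk {n : ℕ} (a b c d : Fin n) :
    Crossing n (a, b) (c, d) ↔ ((a.val < c.val ∧ c.val < b.val ∧ b.val < d.val) ∨
      (c.val < a.val ∧ a.val < d.val ∧ d.val < b.val)) := by
  unfold Crossing
  simp only [Fin.lt_def]

lemma diag_mk {n : ℕ} (a b : Fin n) :
    IsPolygonDiagonal n (a, b) ↔ (a.val + 2 ≤ b.val ∧ ¬(a.val = 0 ∧ b.val = n - 1)) :=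
  Iff.rfl

/-- The apex lemma: any diagonal of a triangulation has an adjacent triangle on its inner side. -/
lemma apex_lemma {n : ℕ} {S : Finset (Fin n × Fin n)} (hS : IsTriangulation n S)
    {a b : Fin n} (hab : (a, b) ∈ S) :
    ∃ w : Fin n, a.val < w.val ∧ w.val < b.val ∧
      (w.val = a.val + 1 ∨ (a, w) ∈ S) ∧ (b.val = w.val + 1 ∨ (w, b) ∈ S) := by
  obtain ⟨hd1, _⟩ := (diag_mk a b).mp (hS.1 _ hab)
  have hbn : b.val < n := b.isLt
  have hw0lt : a.val + 1 < n := by omega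
  set F : Finset (Fin n) :=
    Finset.univ.filter (fun w : Fin n => a.val < w.val ∧ w.val < b.val ∧
      (w.val = a.val + 1 ∨ (a, w) ∈ S)) with hF
  have hmemF : ∀ w : Fin n, w ∈ F ↔ (a.val < w.val ∧ w.val < b.val ∧
      (w.val = a.val + 1 ∨ (a, w) ∈ S)) := by
    intro w; simp [hF]
  have hne : F.Nonempty := ⟨⟨a.val + 1, hw0lt⟩, by rw [hmemF]; exact ⟨show a.val < a.val+1 by omega, show a.val+1 < b.val by omega, Or.inl rfl⟩⟩
  obtain ⟨w, hwF, hwmax⟩ := F.exists_max_image (fun w => w.val) hne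
  rw [hmemF] at hwF
  obtain ⟨hw1, hw2, hw3⟩ := hwF
  refine ⟨w, hw1, hw2, hw3, ?_⟩
  by_contra hcon
  push_neg at hcon
  obtain ⟨hne1, hne2⟩ := hcon
  have hdiag : IsPolygonDiagonal n (w, b) := (diag_mk w b).mpr ⟨by omega, by omega⟩
  obtain ⟨q, hqS, hq⟩ := hS.2.2 _ hdiag hne2
  obtain ⟨c, d⟩ := q
  rw [crossing_mk] at hq
  rcases hq with ⟨h1, h2, h3⟩ | ⟨h1, h2, h3⟩
  · -- w < c < b < d : (c,d) crosses (a,b)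
    exact hS.2.1 _ hab _ hqS ((crossing_mk a b c d).mpr (Or.inl ⟨by omega, by omega, by omega⟩))
  · -- c < w < d < b
    rcases lt_trichotomy c.val a.val with hc | hc | hc
    · exact hS.2.1 _ hab _ hqS ((crossing_mk a b c d).mpr (Or.inr ⟨by omega, by omega, by omega⟩))
    · have hca : c = a := Fin.ext hc
      subst hca
      have hdF : d ∈ F := (hmemF d).mpr ⟨by omega, by omega, Or.inr hqS⟩
      have := hwmax _ hdF
      omega
    · rcases hw3 with hw3 | hw3
      · omega
      · exact hS.2.1 _ hw3 _ hqS ((crossing_mk a w c d).mpr (Or.inl ⟨by omega, by omega, by omega⟩))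

/-- The fan triangulation from vertex 0. -/
def fanF (n : ℕ) : Finset (Fin n × Fin n) :=
  Finset.univ.filter (fun p => p.1.val = 0 ∧ 2 ≤ p.2.val ∧ p.2.val + 2 ≤ n)

lemma mem_fanF {n : ℕ} (p : Fin n × Fin n) :
    p ∈ fanF n ↔ (p.1.val = 0 ∧ 2 ≤ p.2.val ∧ p.2.val + 2 ≤ n) := by
  simp [fanF]

lemma fanF_tri (n : ℕ) (hn : 3 ≤ n) : IsTriangulation n (fanF n) := by
  refine ⟨?_, ?_, ?_⟩
  · intro p hp
    rw [mem_fanF] at hp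
    exact ⟨by omega, by omega⟩
  · intro p hp q hq
    rw [mem_fanF] at hp hq
    rintro (⟨h1, _⟩ | ⟨h1, _⟩) <;> rw [Fin.lt_def] at h1 <;> omega
  · intro p hpd hpS
    obtain ⟨x, y⟩ := p
    rw [mem_fanF] at hpS
    obtain ⟨hd1, hd2⟩ := (diag_mk x y).mp hpd
    simp only [] at hpS hd2
    have hyn : y.val < n := y.isLt
    have hx1 : 1 ≤ x.val := by omega
    refine ⟨(⟨0, by omega⟩, ⟨x.val + 1, by omega⟩), ?_, ?_⟩
    · rw [mem_fanF]; exact ⟨rfl, by simp; omega, by simp; omega⟩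
    · rw [crossing_mk]
      exact Or.inr ⟨show (0:ℕ) < x.val by omega, show x.val < x.val + 1 by omega,
        show x.val + 1 < y.val by omega⟩

lemma eq_fanF {n : ℕ} (hn : 3 ≤ n) {S : Finset (Fin n × Fin n)} (hS : IsTriangulation n S)
    (h0 : ∀ p ∈ S, p.1.val = 0) : S = fanF n := by
  ext p
  rw [mem_fanF]
  constructor
  · intro hp
    obtain ⟨hd1, hd2⟩ := hS.1 _ hp
    have := h0 _ hp
    have : p.2.val < n := p.2.isLt
    constructor
    · exact h0 _ hp
    · have h0' := h0 _ hp
      omega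
  · rintro ⟨h1, h2, h3⟩
    by_contra hp
    have hdiag : IsPolygonDiagonal n p := ⟨by omega, by omega⟩
    obtain ⟨q, hqS, hq⟩ := hS.2.2 _ hdiag hp
    have hq0 := h0 _ hqS
    rcases hq with (⟨hc, _⟩ | ⟨hc, _⟩) <;> rw [Fin.lt_def] at hc <;> omega

lemma crossing_symm {n : ℕ} {p q : Fin n × Fin n} (h : Crossing n p q) : Crossing n q p := by
  unfold Crossing at *; tauto

lemma flip_step {n : ℕ} (hn : 3 ≤ n) {S : Finset (Fin n × Fin n)} (hS : IsTriangulation n S)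
    (hex : ∃ p ∈ S, p.1.val ≠ 0) :
    ∃ T, IsTriangulation n T ∧ (S \ T).card = 1 ∧ (T \ S).card = 1 ∧
      (T.filter (fun p => p.1.val ≠ 0)).card < (S.filter (fun p => p.1.val ≠ 0)).card := by
  classical
  set F := S.filter (fun p => p.1.val ≠ 0) with hFdef
  have hFne : F.Nonempty := by
    obtain ⟨p, hp, hp0⟩ := hex
    exact ⟨p, Finset.mem_filter.mpr ⟨hp, hp0⟩⟩
  obtain ⟨p0, hp0F, hmax⟩ := F.exists_max_image (fun p => p.2.val - p.1.val) hFne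
  obtain ⟨a, b⟩ := p0
  have hab : (a, b) ∈ S := (Finset.mem_filter.mp hp0F).1
  have ha0 : a.val ≠ 0 := (Finset.mem_filter.mp hp0F).2
  obtain ⟨hd1, hd2⟩ := (diag_mk a b).mp (hS.1 _ hab)
  have hbn : b.val < n := b.isLt
  set z : Fin n := ⟨0, by omega⟩ with hzdef
  have hz : z.val = 0 := rfl
  -- (0, a) is an edge
  have Ed0a : a.val = 1 ∨ (z, a) ∈ S := by
    by_cases h1 : a.val = 1
    · exact Or.inl h1
    by_cases h2 : (z, a) ∈ S
    · exact Or.inr h2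
    exfalso
    have hdza : IsPolygonDiagonal n (z, a) := (diag_mk z a).mpr ⟨by omega, by omega⟩
    obtain ⟨q, hqS, hq⟩ := hS.2.2 _ hdza h2
    obtain ⟨c, d⟩ := q
    rw [crossing_mk] at hq
    rcases hq with ⟨h3, h4, h5⟩ | ⟨h3, _⟩
    · -- 0 < c < a < d
      have hqF : (c, d) ∈ F := Finset.mem_filter.mpr ⟨hqS, show c.val ≠ 0 by omega⟩
      have hm : d.val - c.val ≤ b.val - a.val := hmax (c, d) hqF
      have hcd := (diag_mk c d).mp (hS.1 _ hqS)
      rcases lt_trichotomy d.val b.val with hd | hd | hd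
      · exact hS.2.1 _ hab _ hqS ((crossing_mk a b c d).mpr
          (Or.inr ⟨by omega, by omega, by omega⟩))
      · omega
      · omega
    · rw [hz] at h3; omega
  -- (0, b) is an edge
  have Ed0b : b.val = n - 1 ∨ (z, b) ∈ S := by
    by_cases h1 : b.val = n - 1
    · exact Or.inl h1
    by_cases h2 : (z, b) ∈ S
    · exact Or.inr h2
    exfalso
    have hdzb : IsPolygonDiagonal n (z, b) := (diag_mk z b).mpr ⟨by omega, by omega⟩
    obtain ⟨q, hqS, hq⟩ := hS.2.2 _ hdzb h2
    obtain ⟨c, d⟩ := q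
    rw [crossing_mk] at hq
    rcases hq with ⟨h3, h4, h5⟩ | ⟨h3, _⟩
    · -- 0 < c < b < d
      have hqF : (c, d) ∈ F := Finset.mem_filter.mpr ⟨hqS, show c.val ≠ 0 by omega⟩
      have hm : d.val - c.val ≤ b.val - a.val := hmax (c, d) hqF
      rcases lt_trichotomy a.val c.val with hc | hc | hc
      · exact hS.2.1 _ hab _ hqS ((crossing_mk a b c d).mpr
          (Or.inl ⟨by omega, by omega, by omega⟩))
      · omega
      · omega
    · rw [hz] at h3; omega
  -- inner apex
  obtain ⟨w, hw1, hw2, hEaw, hEwb⟩ := apex_lemma hS hab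
  set T : Finset (Fin n × Fin n) := insert (z, w) (S.erase (a, b)) with hTdef
  have hmemT : ∀ p, p ∈ T ↔ (p = (z, w) ∨ (p ∈ S ∧ p ≠ (a, b))) := by
    intro p
    rw [hTdef, Finset.mem_insert, Finset.mem_erase]
    constructor
    · rintro (h | ⟨h1, h2⟩)
      · exact Or.inl h
      · exact Or.inr ⟨h2, h1⟩
    · rintro (h | ⟨h1, h2⟩)
      · exact Or.inl h
      · exact Or.inr ⟨h2, h1⟩
  have hzw_notS : (z, w) ∉ S := fun h =>
    hS.2.1 _ hab _ h ((crossing_mk a b z w).mpr (Or.inr ⟨by omega, by omega, by omega⟩))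
  have hzw_ne : ((z, w) : Fin n × Fin n) ≠ (a, b) := by
    intro h
    have : z = a := congrArg Prod.fst h
    apply ha0; rw [← this]
  -- the new diagonal crosses nothing remaining
  have hcross_zw : ∀ q ∈ S, q ≠ (a, b) → ¬ Crossing n (z, w) q := by
    rintro ⟨c, d⟩ hq hne hcr
    rw [crossing_mk] at hcr
    rcases hcr with ⟨h3, h4, h5⟩ | ⟨h3, _⟩
    · -- 0 < c < w < d
      rcases lt_trichotomy c.val a.val with hc | hc | hc
      · rcases Ed0a with h | h
        · rw [hz] at h3; omega
        · exact hS.2.1 _ h _ hq ((crossing_mk z a c d).mpr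
            (Or.inl ⟨by omega, by omega, by omega⟩))
      · have hca : c = a := Fin.ext hc
        subst hca
        rcases lt_trichotomy d.val b.val with hd | hd | hd
        · rcases hEwb with h | h
          · omega
          · exact hS.2.1 _ h _ hq ((crossing_mk w b c d).mpr
              (Or.inr ⟨by omega, by omega, by omega⟩))
        · exact hne (Prod.ext rfl (Fin.ext hd))
        · rcases Ed0b with h | h
          · have : d.val < n := d.isLt; omega
          · exact hS.2.1 _ h _ hq ((crossing_mk z b c d).mpr
              (Or.inl ⟨by omega, by omega, by omega⟩))
      · rcases hEaw with h | h
        · omega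
        · exact hS.2.1 _ h _ hq ((crossing_mk a w c d).mpr
            (Or.inl ⟨by omega, by omega, by omega⟩))
    · rw [hz] at h3; omega
  have hT : IsTriangulation n T := by
    refine ⟨?_, ?_, ?_⟩
    · intro p hp
      rcases (hmemT p).mp hp with rfl | ⟨hpS, _⟩
      · exact (diag_mk z w).mpr ⟨by omega, by omega⟩
      · exact hS.1 _ hpS
    · intro p hp q hq
      rcases (hmemT p).mp hp with rfl | ⟨hpS, hpne⟩
      · rcases (hmemT q).mp hq with rfl | ⟨hqS, hqne⟩
        · rintro (⟨h, _⟩ | ⟨h, _⟩) <;> exact lt_irrefl _ h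
        · exact hcross_zw q hqS hqne
      · rcases (hmemT q).mp hq with rfl | ⟨hqS, hqne⟩
        · exact fun h => hcross_zw p hpS hpne (crossing_symm h)
        · exact hS.2.1 _ hpS _ hqS
    · intro p hpd hpT
      rw [hmemT] at hpT
      push_neg at hpT
      obtain ⟨hp_ne_zw, hp_imp⟩ := hpT
      by_cases hpS : p ∈ S
      · have hpab : p = (a, b) := hp_imp hpS
        subst hpab
        exact ⟨(z, w), (hmemT _).mpr (Or.inl rfl),
          (crossing_mk a b z w).mpr (Or.inr ⟨by omega, by omega, by omega⟩)⟩
      · obtain ⟨q, hqS, hq⟩ := hS.2.2 p hpd hpS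
        by_cases hqab : q = (a, b)
        · subst hqab
          obtain ⟨x, y⟩ := p
          rw [crossing_mk] at hq
          rcases hq with ⟨h3, h4, h5⟩ | ⟨h3, h4, h5⟩
          · -- x < a < y < b
            by_cases hx0 : x.val = 0
            · rcases lt_trichotomy y.val w.val with hy | hy | hy
              · rcases hEaw with h | h
                · omega
                · refine ⟨(a, w), (hmemT _).mpr (Or.inr ⟨h, ?_⟩), (crossing_mk x y a w).mpr
                    (Or.inl ⟨by omega, by omega, by omega⟩)⟩
                  intro hcon
                  have : w = b := congrArg Prod.snd hcon
                  rw [this] at hw2; omega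
              · exact absurd (Prod.ext (Fin.ext hx0) (Fin.ext hy)) hp_ne_zw
              · rcases hEwb with h | h
                · omega
                · refine ⟨(w, b), (hmemT _).mpr (Or.inr ⟨h, ?_⟩), (crossing_mk x y w b).mpr
                    (Or.inl ⟨by omega, by omega, by omega⟩)⟩
                  intro hcon
                  have : w = a := congrArg Prod.fst hcon
                  rw [this] at hw1; omega
            · rcases Ed0a with h | h
              · omega
              · refine ⟨(z, a), (hmemT _).mpr (Or.inr ⟨h, ?_⟩), (crossing_mk x y z a).mpr
                  (Or.inr ⟨by omega, by omega, by omega⟩)⟩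
                intro hcon
                have : z = a := congrArg Prod.fst hcon
                apply ha0; rw [← this]
          · -- a < x < b < y
            rcases Ed0b with h | h
            · have : y.val < n := y.isLt; omega
            · refine ⟨(z, b), (hmemT _).mpr (Or.inr ⟨h, ?_⟩), (crossing_mk x y z b).mpr
                (Or.inr ⟨by omega, by omega, by omega⟩)⟩
              intro hcon
              have : z = a := congrArg Prod.fst hcon
              apply ha0; rw [← this]
        · exact ⟨q, (hmemT _).mpr (Or.inr ⟨hqS, hqab⟩), hq⟩
  have hsd1 : S \ T = {(a, b)} := by
    ext p
    simp only [Finset.mem_sdiff, Finset.mem_singleton, hmemT]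
    constructor
    · rintro ⟨hpS, hpnT⟩
      push_neg at hpnT
      exact hpnT.2 hpS
    · rintro rfl
      refine ⟨hab, ?_⟩
      push_neg
      exact ⟨fun h => hzw_ne h.symm, fun _ => rfl⟩
  have hsd2 : T \ S = {(z, w)} := by
    ext p
    simp only [Finset.mem_sdiff, Finset.mem_singleton, hmemT]
    constructor
    · rintro ⟨rfl | ⟨hpS, _⟩, hpnS⟩
      · rfl
      · exact absurd hpS hpnS
    · rintro rfl
      exact ⟨Or.inl rfl, hzw_notS⟩
  have habF : (a, b) ∈ F := hp0F
  have hTF : T.filter (fun p => p.1.val ≠ 0) = F.erase (a, b) := by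
    ext p
    simp only [Finset.mem_filter, Finset.mem_erase, hmemT, hFdef]
    constructor
    · rintro ⟨rfl | ⟨hpS, hne⟩, hf⟩
      · exact absurd hz hf
      · exact ⟨hne, hpS, hf⟩
    · rintro ⟨hne, hpS, hf⟩
      exact ⟨Or.inr ⟨hpS, hne⟩, hf⟩
  refine ⟨T, hT, by rw [hsd1]; simp, by rw [hsd2]; simp, ?_⟩
  rw [hTF, Finset.card_erase_of_mem habF]
  exact Nat.sub_lt (Finset.card_pos.mpr hFne) one_pos


/-- The flip graph of the convex `n`-gon: two triangulations are adjacent iff they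
differ by exactly one diagonal (a flip inside a quadrilateral). -/
def flipGraph (n : ℕ) : SimpleGraph {S : Finset (Fin n × Fin n) // IsTriangulation n S} where
  Adj S T := (S.1 \ T.1).card = 1 ∧ (T.1 \ S.1).card = 1
  symm := by constructor; intro S T h; exact ⟨h.2, h.1⟩
  loopless := by constructor; intro S h; simp at h


lemma reach_fan (n : ℕ) (hn : 3 ≤ n) : ∀ (m : ℕ) (S : Finset (Fin n × Fin n))
    (hS : IsTriangulation n S), (S.filter (fun p => p.1.val ≠ 0)).card ≤ m →
    (flipGraph n).Reachable ⟨S, hS⟩ ⟨fanF n, fanF_tri n hn⟩ := by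
  classical
  intro m
  induction m with
  | zero =>
    intro S hS hcard
    have hfe : S.filter (fun p => p.1.val ≠ 0) = ∅ := Finset.card_eq_zero.mp (Nat.le_zero.mp hcard)
    have h0 : ∀ p ∈ S, p.1.val = 0 := by
      intro p hp
      by_contra h
      have : p ∈ S.filter (fun p => p.1.val ≠ 0) := Finset.mem_filter.mpr ⟨hp, h⟩
      rw [hfe] at this
      exact absurd this (Finset.notMem_empty p)
    have : S = fanF n := eq_fanF hn hS h0
    subst this
    rfl
  | succ m ih =>
    intro S hS hcard
    by_cases hex : ∃ p ∈ S, p.1.val ≠ 0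
    · obtain ⟨T, hT, hc1, hc2, hlt⟩ := flip_step hn hS hex
      have hadj : (flipGraph n).Adj ⟨S, hS⟩ ⟨T, hT⟩ := ⟨hc1, hc2⟩
      exact hadj.reachable.trans (ih T hT (by omega))
    · push_neg at hex
      have : S = fanF n := eq_fanF hn hS hex
      subst this
      rfl


/-- The flip graph of triangulations of a convex `n`-gon is connected for all `n ≥ 3`. -/
theorem flipGraph_connected (n : ℕ) (hn : 3 ≤ n) : (flipGraph n).Connected := by
  classical
  rw [SimpleGraph.connected_iff]
  refine ⟨?_, ⟨⟨fanF n, fanF_tri n hn⟩⟩⟩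
  intro S T
  exact (reach_fan n hn _ S.1 S.2 le_rfl).trans (reach_fan n hn _ T.1 T.2 le_rfl).symm
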